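/- Let g : X × Ω → ℝ with each g(·,ω) in a normed space H ⊆ L²(Π), and let f ∈ H with ‖g(·,ω)‖_H ≤ M for all ω. Suppose: (A1) there is a sequence ε_n > 0 such that for any sequence A_n → ∞, the posterior probability P_n(‖f − g‖_n > A_n ε_n) → 0 as n → ∞; (A2) there is a sequence γ_n → 0 and B > 0 with sup_{‖h‖_H ≤ 1} |(1/n) Σ_{i=1}^n h(x_i) − Π[h]| ≤ B γ_n for all n large enough. Then for any sequence C_n → ∞, P_n(|Π[f] − Π[g]| > C_n max(ε_n, γ_n)) → 0 as n → ∞. -/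

import Mathlib

open MeasureTheory Finset Filter

lemma abs_mean_le_sqrt_mean_sq (n : ℕ) (a : Fin n → ℝ) :
    |(1 / n : ℝ) * ∑ i, a i| ≤ Real.sqrt ((1 / n : ℝ) * ∑ i, a i ^ 2) := by
  rw [← Real.sqrt_sq_eq_abs]
  apply Real.sqrt_le_sqrt
  have h1 : (∑ i, a i) ^ 2 ≤ (n : ℝ) * ∑ i, a i ^ 2 := by
    have := sq_sum_le_card_mul_sum_sq (s := (univ : Finset (Fin n))) (f := a)
    simpa using this
  rcases Nat.eq_zero_or_pos n with h | h
  · subst h; simp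
  · have hn : (0 : ℝ) < n := by positivity
    calc ((1 / n : ℝ) * ∑ i, a i) ^ 2 = (1 / n : ℝ) ^ 2 * (∑ i, a i) ^ 2 := by ring
      _ ≤ (1 / n : ℝ) ^ 2 * ((n : ℝ) * ∑ i, a i ^ 2) :=
          mul_le_mul_of_nonneg_left h1 (by positivity)
      _ = (1 / n : ℝ) * ∑ i, a i ^ 2 := by field_simp

/-- Theorem 1: concentration bound for Bayesian probabilistic numerical integration. -/
theorem bpni_concentration {X : Type*} [MeasurableSpace X] {Ω : Type*} [MeasurableSpace Ω]
    (P : Measure X) [IsProbabilityMeasure P]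
    {H : Type*} [NormedAddCommGroup H] [NormedSpace ℝ H]
    (ι : H →ₗ[ℝ] X → ℝ) (hint : ∀ h : H, Integrable (ι h) P)
    (x : (n : ℕ) → Fin n → X)
    (g : Ω → H) (f : H) (M : ℝ) (hM : ∀ ω, ‖g ω‖ ≤ M)
    (Post : ℕ → Measure Ω) (hPost : ∀ n, IsProbabilityMeasure (Post n))
    (ε γ : ℕ → ℝ) (hε : ∀ n, 0 < ε n)
    (hA1 : ∀ A : ℕ → ℝ, Tendsto A atTop atTop →
      Tendsto (fun n => (Post n {ω | A n * ε n <
        Real.sqrt ((1 / n : ℝ) * ∑ i, (ι f (x n i) - ι (g ω) (x n i)) ^ 2)}).toReal)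
        atTop (nhds 0))
    (hγ : Tendsto γ atTop (nhds 0))
    (B : ℝ) (hB : 0 < B)
    (hA2 : ∃ N : ℕ, ∀ n ≥ N, ∀ h : H, ‖h‖ ≤ 1 →
      |(1 / n : ℝ) * ∑ i, ι h (x n i) - ∫ y, ι h y ∂P| ≤ B * γ n)
    (C : ℕ → ℝ) (hC : Tendsto C atTop atTop) :
    Tendsto (fun n => (Post n {ω |
        C n * max (ε n) (γ n) < |∫ y, ι f y ∂P - ∫ y, ι (g ω) y ∂P|}).toReal)
      atTop (nhds 0) := by
  obtain ⟨N, hN⟩ := hA2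
  -- M ≥ 0
  have hΩ : Nonempty Ω := by
    by_contra h
    haveI := hPost 0
    have h1 : (Post 0) Set.univ = 1 := measure_univ
    rw [Set.univ_eq_empty_iff.mpr (not_nonempty_iff.mp h), measure_empty] at h1
    exact zero_ne_one h1
  have hM0 : 0 ≤ M := le_trans (norm_nonneg _) (hM hΩ.some)
  have hfM : 0 ≤ ‖f‖ + M := by positivity
  -- γ n ≥ 0 for n ≥ N
  have hγ0 : ∀ n ≥ N, 0 ≤ γ n := by
    intro n hn
    have := hN n hn 0 (by simp)
    simp only [map_zero, Pi.zero_apply, Finset.sum_const_zero, mul_zero, integral_zero,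
      sub_zero, abs_zero] at this
    nlinarith
  -- the key deterministic bound
  have hbound : ∀ n ≥ N, ∀ h : H,
      |(1 / n : ℝ) * ∑ i, ι h (x n i) - ∫ y, ι h y ∂P| ≤ B * γ n * ‖h‖ := by
    intro n hn h
    rcases eq_or_ne h 0 with rfl | hh
    · simp
    · have hpos : (0 : ℝ) < ‖h‖ := norm_pos_iff.mpr hh
      have := hN n hn (‖h‖⁻¹ • h) (by
        rw [norm_smul, norm_inv, norm_norm, inv_mul_cancel₀ hpos.ne'])
      have hι : ι (‖h‖⁻¹ • h) = fun y => ‖h‖⁻¹ * ι h y := by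
        ext y; rw [LinearMap.map_smul]; simp
      rw [hι] at this
      have hint2 : ∫ y, ‖h‖⁻¹ * ι h y ∂P = ‖h‖⁻¹ * ∫ y, ι h y ∂P :=
        integral_const_mul _ _
      rw [hint2, ← Finset.mul_sum] at this
      have : ‖h‖⁻¹ * |(1 / n : ℝ) * ∑ i, ι h (x n i) - ∫ y, ι h y ∂P| ≤ B * γ n := by
        rw [← abs_of_pos (inv_pos.mpr hpos), ← abs_mul]
        calc |‖h‖⁻¹ * ((1 / n : ℝ) * ∑ i, ι h (x n i) - ∫ y, ι h y ∂P)|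
            = |(1 / n : ℝ) * (‖h‖⁻¹ * ∑ i, ι h (x n i)) - ‖h‖⁻¹ * ∫ y, ι h y ∂P| := by
              ring_nf
          _ ≤ B * γ n := this
      calc |(1 / n : ℝ) * ∑ i, ι h (x n i) - ∫ y, ι h y ∂P|
          = ‖h‖ * (‖h‖⁻¹ * |(1 / n : ℝ) * ∑ i, ι h (x n i) - ∫ y, ι h y ∂P|) := by
            field_simp
        _ ≤ ‖h‖ * (B * γ n) := mul_le_mul_of_nonneg_left this (le_of_lt hpos)
        _ = B * γ n * ‖h‖ := by ring
  -- the diverging sequence A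
  set A : ℕ → ℝ := fun n => C n - B * (‖f‖ + M) with hA_def
  have hA : Tendsto A atTop atTop := by
    simpa [hA_def, sub_eq_add_neg] using
      tendsto_atTop_add_const_right atTop (-(B * (‖f‖ + M))) hC
  have key := hA1 A hA
  apply squeeze_zero' (Filter.Eventually.of_forall fun n => ENNReal.toReal_nonneg) _ key
  filter_upwards [eventually_ge_atTop N, hA.eventually_ge_atTop 0] with n hn hAn
  haveI := hPost n
  apply ENNReal.toReal_mono (measure_ne_top _ _)
  apply measure_mono
  intro ω hω
  simp only [Set.mem_setOf_eq] at hω ⊢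
  set h := f - g ω with hh_def
  have hι : ∀ y, ι f y - ι (g ω) y = ι h y := by
    intro y; rw [hh_def, map_sub]; simp
  have hintdiff : ∫ y, ι f y ∂P - ∫ y, ι (g ω) y ∂P = ∫ y, ι h y ∂P := by
    rw [← integral_sub (hint f) (hint (g ω))]
    exact integral_congr_ae (Filter.Eventually.of_forall fun y => hι y)
  have hsum : ∀ i, (ι f (x n i) - ι (g ω) (x n i)) ^ 2 = (ι h (x n i)) ^ 2 := by
    intro i; rw [hι]
  rw [hintdiff] at hω
  have hnormh : ‖h‖ ≤ ‖f‖ + M := le_trans (norm_sub_le _ _) (by linarith [hM ω])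
  have hb := hbound n hn h
  have hcs := abs_mean_le_sqrt_mean_sq n (fun i => ι h (x n i))
  set S := Real.sqrt ((1 / n : ℝ) * ∑ i, (ι h (x n i)) ^ 2) with hS_def
  have hsum2 : Real.sqrt ((1 / n : ℝ) * ∑ i, (ι f (x n i) - ι (g ω) (x n i)) ^ 2) = S := by
    rw [hS_def]; congr 1; congr 1; exact Finset.sum_congr rfl fun i _ => hsum i
  rw [hsum2]
  -- |∫ ι h| ≤ S + B γ n ‖h‖
  have htri : |∫ y, ι h y ∂P| ≤ S + B * γ n * ‖h‖ := by
    calc |∫ y, ι h y ∂P|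
        ≤ |(1 / n : ℝ) * ∑ i, ι h (x n i)| +
          |(1 / n : ℝ) * ∑ i, ι h (x n i) - ∫ y, ι h y ∂P| := by
          have := abs_sub_abs_le_abs_sub ((1 / n : ℝ) * ∑ i, ι h (x n i)) (∫ y, ι h y ∂P)
          have h2 := abs_sub ((1 / n : ℝ) * ∑ i, ι h (x n i)) (∫ y, ι h y ∂P)
          nlinarith [abs_nonneg ((1 / n : ℝ) * ∑ i, ι h (x n i) - ∫ y, ι h y ∂P),
            abs_sub_abs_le_abs_sub (∫ y, ι h y ∂P) ((1 / n : ℝ) * ∑ i, ι h (x n i)),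
            abs_sub_comm ((1 / n : ℝ) * ∑ i, ι h (x n i)) (∫ y, ι h y ∂P)]
      _ ≤ S + B * γ n * ‖h‖ := add_le_add hcs hb
  have hγn := hγ0 n hn
  have hmax_ε : ε n ≤ max (ε n) (γ n) := le_max_left _ _
  have hmax_γ : γ n ≤ max (ε n) (γ n) := le_max_right _ _
  have hBγ : B * γ n * ‖h‖ ≤ B * (‖f‖ + M) * max (ε n) (γ n) := by
    calc B * γ n * ‖h‖ ≤ B * γ n * (‖f‖ + M) :=
          mul_le_mul_of_nonneg_left hnormh (by positivity)
      _ = B * (‖f‖ + M) * γ n := by ring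
      _ ≤ B * (‖f‖ + M) * max (ε n) (γ n) :=
          mul_le_mul_of_nonneg_left hmax_γ (by positivity)
  -- conclude
  have hAn' : A n * ε n ≤ A n * max (ε n) (γ n) :=
    mul_le_mul_of_nonneg_left hmax_ε hAn
  have : A n * max (ε n) (γ n) < S := by
    simp only [hA_def]
    nlinarith
  linarith
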